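/- For every integer n ≥ 3 there exists a metric space M with exactly n points that is generic, i.e., s(M) > 0, t(M) > 0, and e(M) > 0. (Such a space can be obtained from the n-point space with all distances 1 by perturbing the nonzero distances by pairwise distinct real numbers of absolute value at most 1/3.) -/

import Mathlib

open ENNReal

/-- A metric on a set `I`: symmetric, vanishing exactly on the diagonal, triangle inequality. -/
def IsMetric {I : Type*} (d : I → I → ℝ) : Prop :=
  (∀ x y, d x y = d y x) ∧ (∀ x y, d x y = 0 ↔ x = y) ∧ ∀ x y z, d x z ≤ d x y + d y z

/-- `s(d) = inf{d(i,j) : i ≠ j}`. -/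
noncomputable def sVal {I : Type*} (d : I → I → ℝ) : ℝ :=
  sInf {r : ℝ | ∃ i j : I, i ≠ j ∧ r = d i j}

/-- `t(d) = inf{d(i,j) + d(j,k) - d(i,k) : i, j, k pairwise distinct}`. -/
noncomputable def tVal {I : Type*} (d : I → I → ℝ) : ℝ :=
  sInf {r : ℝ | ∃ i j k : I, i ≠ j ∧ j ≠ k ∧ i ≠ k ∧ r = d i j + d j k - d i k}

/-- `e(d) = inf{dis f : f : I ≃ I, f ≠ id}`, a value in `[0,∞]`. -/
noncomputable def eVal {I : Type*} (d : I → I → ℝ) : ℝ≥0∞ :=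
  ⨅ f ∈ {f : I ≃ I | f ≠ Equiv.refl I},
    ⨆ i : I, ⨆ j : I, ENNReal.ofReal |d (f i) (f j) - d i j|

/-- Pair code: distinct for distinct unordered pairs. -/
def PP (n : ℕ) (i j : Fin n) : ℕ := min i.val j.val + n * max i.val j.val

noncomputable def dd (n : ℕ) (i j : Fin n) : ℝ :=
  if i = j then 0 else 1 + (PP n i j : ℝ) / (8 * (n : ℝ) ^ 2)

variable {n : ℕ}

lemma PP_symm (i j : Fin n) : PP n i j = PP n j i := by
  simp [PP, min_comm, max_comm]

lemma PP_inj {i j k l : Fin n} (hij : i ≠ j) (hkl : k ≠ l)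
    (h : PP n i j = PP n k l) : (i = k ∧ j = l) ∨ (i = l ∧ j = k) := by
  have hn : 0 < n := i.pos
  unfold PP at h
  have hm1 : min i.val j.val < n := lt_of_le_of_lt (min_le_left _ _) i.isLt
  have hm2 : min k.val l.val < n := lt_of_le_of_lt (min_le_left _ _) k.isLt
  have e1 : min i.val j.val = min k.val l.val := by
    have h' := congrArg (· % n) h
    simpa [Nat.add_mul_mod_self_left, Nat.mod_eq_of_lt hm1, Nat.mod_eq_of_lt hm2] using h'
  have e2 : max i.val j.val = max k.val l.val := Nat.eq_of_mul_eq_mul_left hn (by omega)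
  have hij' : i.val ≠ j.val := fun h' => hij (Fin.ext h')
  have hkl' : k.val ≠ l.val := fun h' => hkl (Fin.ext h')
  have : (i.val = k.val ∧ j.val = l.val) ∨ (i.val = l.val ∧ j.val = k.val) := by omega
  rcases this with ⟨h1, h2⟩ | ⟨h1, h2⟩
  · exact Or.inl ⟨Fin.ext h1, Fin.ext h2⟩
  · exact Or.inr ⟨Fin.ext h1, Fin.ext h2⟩

lemma dd_self (i : Fin n) : dd n i i = 0 := by simp [dd]

lemma dd_eq {i j : Fin n} (h : i ≠ j) :
    dd n i j = 1 + (PP n i j : ℝ) / (8 * (n : ℝ) ^ 2) := by simp [dd, h]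

lemma dd_symm (i j : Fin n) : dd n i j = dd n j i := by
  rcases eq_or_ne i j with rfl | h
  · rfl
  · rw [dd_eq h, dd_eq h.symm, PP_symm]

lemma pert_lt (i j : Fin n) : (PP n i j : ℝ) / (8 * (n : ℝ) ^ 2) < 1 / 8 := by
  have hn : 0 < n := i.pos
  have hn' : (1 : ℝ) ≤ n := by exact_mod_cast hn
  have hi : (i.val : ℝ) ≤ (n : ℝ) - 1 := by
    have := i.isLt
    have : (i.val : ℝ) + 1 ≤ n := by exact_mod_cast this
    linarith
  have hj : (j.val : ℝ) ≤ (n : ℝ) - 1 := by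
    have := j.isLt
    have : (j.val : ℝ) + 1 ≤ n := by exact_mod_cast this
    linarith
  have hmin : (min i.val j.val : ℝ) ≤ (n : ℝ) - 1 := by
    have : (min i.val j.val : ℝ) ≤ (i.val : ℝ) := by exact_mod_cast min_le_left _ _
    linarith
  have hmax : (max i.val j.val : ℝ) ≤ (n : ℝ) - 1 := by
    exact max_le hi hj
  have hP : (PP n i j : ℝ) < (n : ℝ) ^ 2 := by
    have : (PP n i j : ℝ) = (min i.val j.val : ℝ) + (n : ℝ) * (max i.val j.val : ℝ) := by
      unfold PP; push_cast; ring
    rw [this]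
    nlinarith
  rw [div_lt_iff₀ (by positivity)]
  nlinarith

lemma dd_nonneg (i j : Fin n) : 0 ≤ dd n i j := by
  rcases eq_or_ne i j with rfl | h
  · simp [dd_self]
  · rw [dd_eq h]; positivity

lemma dd_one_le {i j : Fin n} (h : i ≠ j) : 1 ≤ dd n i j := by
  rw [dd_eq h]
  have : (0 : ℝ) ≤ (PP n i j : ℝ) / (8 * (n : ℝ) ^ 2) := by positivity
  linarith

lemma dd_le {i j : Fin n} (h : i ≠ j) : dd n i j ≤ 9 / 8 := by
  rw [dd_eq h]
  have := pert_lt i j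
  linarith

lemma dd_triangle (x y z : Fin n) : dd n x z ≤ dd n x y + dd n y z := by
  rcases eq_or_ne x z with rfl | hxz
  · rw [dd_self]; exact add_nonneg (dd_nonneg _ _) (dd_nonneg _ _)
  · rcases eq_or_ne y x with rfl | hyx
    · simp [dd_self]
    · rcases eq_or_ne y z with rfl | hyz
      · simp [dd_self]
      · have h1 := dd_one_le (Ne.symm hyx)
        have h2 := dd_one_le hyz
        have h3 := dd_le hxz
        linarith

/-- For every integer `n ≥ 3` there exists a generic metric space with exactly `n` points:
a metric `d` on `{1,…,n}` with `s > 0`, `t > 0`, and `e > 0`. -/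
theorem stmt_14 (n : ℕ) (hn : 3 ≤ n) :
    ∃ d : Fin n → Fin n → ℝ,
      IsMetric d ∧ 0 < sVal d ∧ 0 < tVal d ∧ 0 < eVal d := by
  refine ⟨dd n, ⟨dd_symm, ?_, dd_triangle⟩, ?_, ?_, ?_⟩
  · intro x y
    constructor
    · intro h
      by_contra hxy
      have := dd_one_le hxy
      rw [h] at this; linarith
    · rintro rfl; exact dd_self x
  · -- sVal
    have x0 : Fin n := ⟨0, by omega⟩
    have hle : (1 : ℝ) ≤ sVal (dd n) := by
      apply le_csInf
      · exact ⟨dd n ⟨0, by omega⟩ ⟨1, by omega⟩, ⟨0, by omega⟩, ⟨1, by omega⟩,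
          by simp [Fin.ext_iff], rfl⟩
      · rintro r ⟨i, j, hij, rfl⟩
        exact dd_one_le hij
    linarith
  · -- tVal
    have hle : (7 : ℝ) / 8 ≤ tVal (dd n) := by
      apply le_csInf
      · refine ⟨_, ⟨0, by omega⟩, ⟨1, by omega⟩, ⟨2, by omega⟩,
          by simp [Fin.ext_iff], by simp [Fin.ext_iff], by simp [Fin.ext_iff], rfl⟩
      · rintro r ⟨i, j, k, hij, hjk, hik, rfl⟩
        have h1 := dd_one_le hij
        have h2 := dd_one_le hjk
        have h3 := dd_le hik
        linarith
    linarith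
  · -- eVal
    have hnpos : (0 : ℝ) < 8 * (n : ℝ) ^ 2 := by
      have : (0 : ℝ) < n := by exact_mod_cast (by omega : 0 < n)
      positivity
    have key : ∀ f : Fin n ≃ Fin n, f ≠ Equiv.refl (Fin n) →
        ∃ x y : Fin n, 1 / (8 * (n : ℝ) ^ 2) ≤ |dd n (f x) (f y) - dd n x y| := by
      intro f hf
      have hne : ∃ x y, dd n (f x) (f y) ≠ dd n x y := by
        by_contra h
        push_neg at h
        obtain ⟨i, hi⟩ : ∃ i, f i ≠ i := by
          by_contra h'
          push_neg at h'
          exact hf (Equiv.ext fun x => h' x)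
        have pair : ∀ x y : Fin n, x ≠ y →
            (f x = x ∧ f y = y) ∨ (f x = y ∧ f y = x) := by
          intro x y hxy
          have hfxy : f x ≠ f y := fun h' => hxy (f.injective h')
          have h1 := h x y
          rw [dd_eq hfxy, dd_eq hxy] at h1
          have hP : PP n (f x) (f y) = PP n x y := by
            have : (PP n (f x) (f y) : ℝ) = (PP n x y : ℝ) := by
              field_simp at h1
              linarith
            exact_mod_cast this
          exact PP_inj hfxy hxy hP
        obtain ⟨k, hk⟩ : ∃ k : Fin n, k ∉ ({i, f i} : Finset (Fin n)) := by
          have hcard : ({i, f i} : Finset (Fin n)).card < Fintype.card (Fin n) := by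
            have h2 : ({i, f i} : Finset (Fin n)).card ≤ 2 := by
              apply le_trans (Finset.card_insert_le _ _)
              simp
            simp only [Fintype.card_fin]
            omega
          have : (({i, f i} : Finset (Fin n))ᶜ).Nonempty := by
            rw [← Finset.card_pos, Finset.card_compl]
            omega
          obtain ⟨k, hk⟩ := this
          exact ⟨k, Finset.mem_compl.mp hk⟩
        simp only [Finset.mem_insert, Finset.mem_singleton, not_or] at hk
        rcases pair k i hk.1 with ⟨_, h2⟩ | ⟨h2, h3⟩
        · exact hi h2
        · exact hk.2 h3.symm
      obtain ⟨x, y, hxy⟩ := hne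
      have hxy' : x ≠ y := by rintro rfl; exact hxy (by rw [dd_self, dd_self])
      have hfxy : f x ≠ f y := fun h' => hxy' (f.injective h')
      refine ⟨x, y, ?_⟩
      have hPne : PP n (f x) (f y) ≠ PP n x y := by
        intro h'
        apply hxy
        rw [dd_eq hfxy, dd_eq hxy', h']
      have h1 : (1 : ℝ) ≤ |(PP n (f x) (f y) : ℝ) - (PP n x y : ℝ)| := by
        have hz : ((PP n (f x) (f y) : ℤ) - (PP n x y : ℤ)) ≠ 0 :=
          sub_ne_zero.mpr (by exact_mod_cast hPne)
        have h2 := Int.one_le_abs hz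
        have : (1 : ℝ) ≤ |((PP n (f x) (f y) : ℤ) - (PP n x y : ℤ) : ℤ)| := by
          exact_mod_cast h2
        convert this using 2
        push_cast
        ring
      rw [dd_eq hfxy, dd_eq hxy']
      have heq : (1 + (PP n (f x) (f y) : ℝ) / (8 * (n : ℝ) ^ 2)) -
          (1 + (PP n x y : ℝ) / (8 * (n : ℝ) ^ 2)) =
          ((PP n (f x) (f y) : ℝ) - (PP n x y : ℝ)) / (8 * (n : ℝ) ^ 2) := by ring
      rw [heq, abs_div, abs_of_pos hnpos]
      gcongr
    have hbound : ENNReal.ofReal (1 / (8 * (n : ℝ) ^ 2)) ≤ eVal (dd n) := by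
      unfold eVal
      refine le_iInf₂ fun f hf => ?_
      obtain ⟨x, y, hxy⟩ := key f (by simpa using hf)
      calc ENNReal.ofReal (1 / (8 * (n : ℝ) ^ 2))
          ≤ ENNReal.ofReal |dd n (f x) (f y) - dd n x y| := ENNReal.ofReal_le_ofReal hxy
        _ ≤ ⨆ i, ⨆ j, ENNReal.ofReal |dd n (f i) (f j) - dd n i j| :=
            le_iSup₂ (f := fun i j => ENNReal.ofReal |dd n (f i) (f j) - dd n i j|) x y
    exact lt_of_lt_of_le (ENNReal.ofReal_pos.mpr (by positivity)) hbound
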